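/- The number of distinct halfspace classifiers on a finite set X ⊆ ℝ^d is at most 2|X|^{d+1}: |{hs_{a,w} restricted to X : a ∈ ℝ^d, w ∈ ℝ}| ≤ 2|X|^{d+1}, where hs_{a,w}(x) = 1 iff ⟨a,x⟩ ≥ w. -/

import Mathlib

open scoped Classical

private lemma sum_choose_le_pow_add_one (n : ℕ) (hn : 1 ≤ n) :
    ∀ m, 1 ≤ m → ∑ k ∈ Finset.range (m + 1), n.choose k ≤ n ^ m + 1 := by
  intro m
  induction m with
  | zero => omega
  | succ m ih =>
    intro _
    rcases Nat.eq_or_lt_of_le (Nat.one_le_iff_ne_zero.mpr (Nat.succ_ne_zero m)) with h1 | h1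
    · -- m + 1 = 1
      have : m = 0 := by omega
      subst this
      simp [Finset.sum_range_succ, Nat.choose_one_right]
      omega
    · have hm : 1 ≤ m := by omega
      have step : n.choose (m + 1) ≤ n ^ m * (n - 1) := by
        rcases Nat.eq_or_lt_of_le hn with h2 | h2
        · have : n = 1 := h2.symm
          subst this
          rw [Nat.choose_eq_zero_of_lt (by omega)]
          exact Nat.zero_le _
        · -- n ≥ 2
          have key : n * (n - 1).choose m = n.choose (m + 1) * (m + 1) := by
            have := Nat.add_one_mul_choose_eq (n - 1) m
            rwa [Nat.sub_add_cancel hn] at this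
          have h3 : n.choose (m + 1) ≤ n * (n - 1).choose m := by
            calc n.choose (m + 1) ≤ n.choose (m + 1) * (m + 1) :=
                  Nat.le_mul_of_pos_right _ (by omega)
              _ = n * (n - 1).choose m := key.symm
          have h4 : (n - 1).choose m ≤ (n - 1) ^ m := Nat.choose_le_pow (n - 1) m
          calc n.choose (m + 1) ≤ n * (n - 1) ^ m := h3.trans (Nat.mul_le_mul_left _ h4)
            _ = n * (n - 1) * (n - 1) ^ (m - 1) := by
                rw [mul_assoc, ← pow_succ']
                congr 2
                omega
            _ ≤ n * (n - 1) * n ^ (m - 1) :=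
                Nat.mul_le_mul_left _ (Nat.pow_le_pow_left (by omega) _)
            _ = (n - 1) * (n * n ^ (m - 1)) := by ring
            _ = (n - 1) * n ^ m := by
                rw [← pow_succ']
                congr 2
                omega
            _ = n ^ m * (n - 1) := by ring
      calc ∑ k ∈ Finset.range (m + 2), n.choose k
          = (∑ k ∈ Finset.range (m + 1), n.choose k) + n.choose (m + 1) := by
            rw [Finset.sum_range_succ]
        _ ≤ (n ^ m + 1) + n ^ m * (n - 1) := Nat.add_le_add (ih hm) step
        _ = n ^ m * 1 + n ^ m * (n - 1) + 1 := by ring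
        _ = n ^ m * n + 1 := by
            rw [← Nat.mul_add]
            congr 2
            omega
        _ = n ^ (m + 1) + 1 := by rw [pow_succ]

theorem card_halfspace_classifiers_le {d : ℕ} (X : Finset (Fin d → ℝ)) (hX : 1 ≤ X.card) :
    Set.ncard {f : X → Bool | ∃ (a : Fin d → ℝ) (w : ℝ),
        ∀ x : X, f x = decide (w ≤ ∑ j, a j * (x : Fin d → ℝ) j)}
      ≤ 2 * X.card ^ (d + 1) := by
  classical
  set S : Set (X → Bool) := {f : X → Bool | ∃ (a : Fin d → ℝ) (w : ℝ),
      ∀ x : X, f x = decide (w ≤ ∑ j, a j * (x : Fin d → ℝ) j)} with hS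
  set φ : (X → Bool) → Finset X := fun f => Finset.univ.filter (fun x => f x = true) with hφ
  have hφinj : Function.Injective φ := by
    intro f g hfg
    funext x
    have := Finset.ext_iff.mp hfg x
    simp only [hφ, Finset.mem_filter, Finset.mem_univ, true_and] at this
    cases hf : f x <;> cases hg : g x <;> simp_all
  set 𝒜 : Finset (Finset X) := S.toFinset.image φ with h𝒜
  have hcard : S.ncard = 𝒜.card := by
    rw [Set.ncard_eq_toFinset_card', h𝒜, Finset.card_image_of_injective _ hφinj]
  -- every shattered set has card ≤ d + 1
  have hshat : ∀ s ∈ 𝒜.shatterer, s.card ≤ d + 1 := by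
    intro s hs
    by_contra hcon
    push_neg at hcon
    obtain ⟨t, hts, htcard⟩ := Finset.exists_subset_card_eq (show d + 2 ≤ s.card by omega)
    have htshat : 𝒜.Shatters t :=
      (Finset.mem_shatterer.mp hs).mono_right hts
    -- the points of t as a family
    set g : t → (Fin d → ℝ) := fun i => ((i : X) : Fin d → ℝ) with hg
    have hnotAI : ¬ AffineIndependent ℝ g := by
      intro hAI
      have h1 := hAI.card_le_finrank_succ
      have h2 : Module.finrank ℝ (vectorSpan ℝ (Set.range g)) ≤ d := by
        have := Submodule.finrank_le (vectorSpan ℝ (Set.range g))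
        simpa using this
      rw [Fintype.card_coe] at h1
      omega
    obtain ⟨I, p, hpI, hpIc⟩ := Convex.radon_partition (𝕜 := ℝ) hnotAI
    -- build the subset of t corresponding to I
    set t₁ : Finset X := (t.attach.filter (fun i => i ∈ I)).image Subtype.val with ht₁
    have ht₁t : t₁ ⊆ t := by
      intro x hx
      simp only [ht₁, Finset.mem_image, Finset.mem_filter, Finset.mem_attach, true_and] at hx
      obtain ⟨i, _, rfl⟩ := hx
      exact i.2
    obtain ⟨u, hu𝒜, hut⟩ := htshat ht₁t
    obtain ⟨f, hfS, rfl⟩ := Finset.mem_image.mp hu𝒜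
    obtain ⟨a, w, hfa⟩ := Set.mem_toFinset.mp hfS
    set L : (Fin d → ℝ) → ℝ := fun y => ∑ j, a j * y j with hL
    have hLlin : IsLinearMap ℝ L := by
      constructor
      · intro y z
        simp [hL, mul_add, Finset.sum_add_distrib]
      · intro c y
        simp [hL, Finset.mul_sum, mul_left_comm]
    -- points in I satisfy w ≤ L, points outside satisfy L < w
    have hIn : ∀ i : t, i ∈ I → w ≤ L (g i) := by
      intro i hi
      have hmem : (i : X) ∈ t₁ := by
        simp only [ht₁, Finset.mem_image]
        exact ⟨i, Finset.mem_filter.mpr ⟨Finset.mem_attach _ _, hi⟩, rfl⟩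
      have : (i : X) ∈ t ∩ φ f := hut ▸ hmem
      have hfu : f i = true := by
        have := (Finset.mem_inter.mp this).2
        simpa [hφ] using this
      have := hfa i
      rw [hfu] at this
      have := of_decide_eq_true this.symm
      simpa [hL, hg] using this
    have hOut : ∀ i : t, i ∉ I → L (g i) < w := by
      intro i hi
      have hmem : (i : X) ∉ t₁ := by
        simp only [ht₁, Finset.mem_image, Finset.mem_filter, Finset.mem_attach, true_and]
        rintro ⟨j, hj, hji⟩
        have : j = i := Subtype.ext hji
        exact hi (this ▸ hj)
      have hnotu : (i : X) ∉ φ f := by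
        intro hc
        exact hmem (hut ▸ Finset.mem_inter.mpr ⟨i.2, hc⟩)
      have hfu : f i = false := by
        by_contra hc
        simp only [Bool.not_eq_false] at hc
        exact hnotu (by simp [hφ, hc])
      have := hfa i
      rw [hfu] at this
      have := of_decide_eq_false this.symm
      push_neg at this
      simpa [hL, hg] using this
    -- convexity contradiction
    have hp1 : w ≤ L p := by
      have hsub : g '' I ⊆ {y | w ≤ L y} := by
        rintro y ⟨i, hi, rfl⟩
        exact hIn i hi
      exact convexHull_min hsub (convex_halfSpace_ge hLlin w) hpI
    have hp2 : L p < w := by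
      have hsub : g '' Iᶜ ⊆ {y | L y < w} := by
        rintro y ⟨i, hi, rfl⟩
        exact hOut i hi
      exact convexHull_min hsub (convex_halfSpace_lt hLlin w) hpIc
    linarith
  -- counting
  have hsub : 𝒜.shatterer ⊆ (Finset.range (d + 2)).biUnion
      (fun k => Finset.powersetCard k (Finset.univ : Finset X)) := by
    intro s hs
    rw [Finset.mem_biUnion]
    exact ⟨s.card, Finset.mem_range.mpr (by have := hshat s hs; omega),
      Finset.mem_powersetCard.mpr ⟨Finset.subset_univ _, rfl⟩⟩
  have hcount : 𝒜.shatterer.card ≤ ∑ k ∈ Finset.range (d + 2), X.card.choose k := by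
    calc 𝒜.shatterer.card ≤ _ := Finset.card_le_card hsub
      _ ≤ ∑ k ∈ Finset.range (d + 2), (Finset.powersetCard k (Finset.univ : Finset X)).card :=
        Finset.card_biUnion_le
      _ = ∑ k ∈ Finset.range (d + 2), X.card.choose k := by
        refine Finset.sum_congr rfl (fun k _ => ?_)
        rw [Finset.card_powersetCard, Finset.card_univ, Fintype.card_coe]
  have hfinal : ∑ k ∈ Finset.range (d + 2), X.card.choose k ≤ 2 * X.card ^ (d + 1) := by
    have h1 : ∑ k ∈ Finset.range (d + 2), X.card.choose k ≤ X.card ^ (d + 1) + 1 :=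
      sum_choose_le_pow_add_one X.card hX (d + 1) (by omega)
    have h2 : 1 ≤ X.card ^ (d + 1) := Nat.one_le_pow _ _ (by omega)
    omega
  calc S.ncard = 𝒜.card := hcard
    _ ≤ 𝒜.shatterer.card := Finset.card_le_card_shatterer 𝒜
    _ ≤ _ := hcount.trans hfinal
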